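/- For every n ∈ ℕ, ∫_{{ξ ∈ ℝ : 2^n < |ξ| < 2^{n+1}}} g_n(ξ)² dξ ≥ 2^{−n} (and since g_n vanishes outside this annulus, also ∫_ℝ g_n(ξ)² dξ ≥ 2^{−n}). -/

import Mathlib

open MeasureTheory Real Set Convolution

/-- The sequence of functions `g n`: `g 0` is the indicator of `(1,2)` and
`g (n+1) = g n * g n` (convolution). -/
noncomputable def g : ℕ → ℝ → ℝ
  | 0 => Set.indicator (Set.Ioo (1:ℝ) 2) 1
  | n + 1 => fun ξ => ∫ ρ : ℝ, g n ρ * g n (ξ - ρ)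

/-- `f n t = exp(-(3/2) t 2^(n+4)) 2^(-5(2^n-1)) 2^(5n)`. -/
noncomputable def f (n : ℕ) (t : ℝ) : ℝ :=
  Real.exp (-(3/2) * t * 2 ^ (n + 4)) * (2:ℝ) ^ (-(5:ℝ) * ((2:ℝ) ^ n - 1)) * 2 ^ (5 * n)

/-- The blow-up time `T_* = (2 ln 2)/3`. -/
noncomputable def Tstar : ℝ := 2 * Real.log 2 / 3

/-- The (Fourier side) nonlinear term
`γ₁ (|·|v * |·|v)(ξ) - γ₂ (v * (·)² v)(ξ)`, as a well-defined element of `[0,∞]`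
(recall `γ₂ ≤ 0 ≤ γ₁`). -/
noncomputable def nlTerm (γ₁ γ₂ : ℝ) (vτ : ℝ → ℝ) (ξ : ℝ) : ENNReal :=
  ENNReal.ofReal γ₁ * ∫⁻ ρ : ℝ, ENNReal.ofReal (|ρ| * vτ ρ * (|ξ - ρ| * vτ (ξ - ρ)))
  + ENNReal.ofReal (-γ₂) * ∫⁻ ρ : ℝ, ENNReal.ofReal (vτ ρ * ((ξ - ρ)^2 * vτ (ξ - ρ)))

/-- A nonnegative measurable `v` on `[0,T] × ℝ` satisfies the Duhamel–Fourier
inequality if for all `t ∈ [0,T]` and `ξ ∈ ℝ`,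
`v(t,ξ) ≥ η e^{-(3/2)tξ⁴} 𝟙_{(1,2)}(ξ) + ∫₀ᵗ e^{-(3/2)(t-τ)ξ⁴} (γ₁ (|·|v*|·|v) - γ₂ (v*(·)²v))(τ,ξ) dτ`,
the right-hand side being well defined in `[0,∞]`. -/
def DuhamelIneq (γ₁ γ₂ η T : ℝ) (v : ℝ → ℝ → ℝ) : Prop :=
  ∀ t ∈ Set.Icc (0:ℝ) T, ∀ ξ : ℝ,
    ENNReal.ofReal (v t ξ) ≥
      ENNReal.ofReal (η * Real.exp (-(3/2) * t * ξ^4) * Set.indicator (Set.Ioo (1:ℝ) 2) 1 ξ)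
      + ∫⁻ τ in Set.Ioc (0:ℝ) t,
          ENNReal.ofReal (Real.exp (-(3/2) * (t - τ) * ξ^4)) * nlTerm γ₁ γ₂ (v τ) ξ

lemma g_props (n : ℕ) : Measurable (g n) ∧ (∀ ξ, 0 ≤ g n ξ) ∧ (∀ ξ, g n ξ ≤ 1) ∧
    (∀ ξ, ξ ∉ Set.Ioo ((2:ℝ)^n) (2^(n+1)) → g n ξ = 0) ∧ (∫ ξ, g n ξ = 1) := by
  induction n with
  | zero =>
    refine ⟨measurable_const.indicator measurableSet_Ioo, fun ξ => ?_, fun ξ => ?_, fun ξ hξ => ?_, ?_⟩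
    · classical simp only [g, Set.indicator_apply]; split <;> norm_num
    · classical simp only [g, Set.indicator_apply]; split <;> norm_num
    · have : ξ ∉ Set.Ioo (1:ℝ) 2 := by norm_num at hξ ⊢; intro h; exact hξ h
      simp [g, Set.indicator_of_notMem this]
    · show ∫ ξ, Set.indicator (Set.Ioo (1:ℝ) 2) 1 ξ = 1
      rw [MeasureTheory.integral_indicator_one measurableSet_Ioo, Real.volume_real_Ioo]
      norm_num
  | succ n ih =>
    obtain ⟨hm, hnn, hle, h0, hint1⟩ := ih
    have hvol : volume (Set.Ioo ((2:ℝ)^n) (2^(n+1))) < ⊤ := measure_Ioo_lt_top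
    have hintg : Integrable (g n) := by
      have hb : Integrable (Set.indicator (Set.Ioo ((2:ℝ)^n) (2^(n+1))) (fun _ => (1:ℝ))) := by
        rw [integrable_indicator_iff measurableSet_Ioo]
        exact integrableOn_const hvol.ne
      refine hb.mono' hm.aestronglyMeasurable (ae_of_all _ fun ξ => ?_)
      by_cases h : ξ ∈ Set.Ioo ((2:ℝ)^n) (2^(n+1))
      · rw [Real.norm_eq_abs, abs_of_nonneg (hnn ξ), Set.indicator_of_mem h]; exact hle ξ
      · simp [h0 ξ h, Set.indicator_of_notMem h]
    have hi : ∀ ξ, Integrable (fun ρ => g n ρ * g n (ξ - ρ)) := by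
      intro ξ
      refine hintg.mono' ((hm.mul (hm.comp (measurable_const.sub measurable_id))).aestronglyMeasurable)
        (ae_of_all _ fun ρ => ?_)
      rw [Real.norm_eq_abs, abs_of_nonneg (mul_nonneg (hnn ρ) (hnn (ξ - ρ)))]
      calc g n ρ * g n (ξ - ρ) ≤ g n ρ * 1 :=
            mul_le_mul_of_nonneg_left (hle _) (hnn ρ)
        _ = g n ρ := mul_one _
    refine ⟨?_, fun ξ => ?_, fun ξ => ?_, fun ξ hξ => ?_, ?_⟩
    · have : StronglyMeasurable fun p : ℝ × ℝ => g n p.2 * g n (p.1 - p.2) :=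
        ((hm.comp measurable_snd).mul (hm.comp (measurable_fst.sub measurable_snd))).stronglyMeasurable
      exact this.integral_prod_right'.measurable
    · exact integral_nonneg fun ρ => mul_nonneg (hnn ρ) (hnn (ξ - ρ))
    · show (∫ ρ : ℝ, g n ρ * g n (ξ - ρ)) ≤ 1
      calc (∫ ρ : ℝ, g n ρ * g n (ξ - ρ)) ≤ ∫ ρ : ℝ, g n ρ := by
            refine integral_mono (hi ξ) hintg fun ρ => ?_
            calc g n ρ * g n (ξ - ρ) ≤ g n ρ * 1 :=
                  mul_le_mul_of_nonneg_left (hle _) (hnn ρ)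
              _ = g n ρ := mul_one _
        _ = 1 := hint1
    · show (∫ ρ : ℝ, g n ρ * g n (ξ - ρ)) = 0
      have hz : ∀ ρ : ℝ, g n ρ * g n (ξ - ρ) = 0 := by
        intro ρ
        rw [Set.mem_Ioo, not_and_or, not_lt, not_lt] at hξ
        have e1 : (2:ℝ)^(n+1) = 2^n + 2^n := by ring
        have e2 : (2:ℝ)^(n+1+1) = 2^(n+1) + 2^(n+1) := by ring
        rcases hξ with hξ | hξ
        · by_cases hρ : ρ ≤ 2^n
          · rw [h0 ρ (by rw [Set.mem_Ioo, not_and_or, not_lt]; exact Or.inl hρ), zero_mul]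
          · push_neg at hρ
            rw [h0 (ξ - ρ) (by rw [Set.mem_Ioo, not_and_or, not_lt]; left; linarith), mul_zero]
        · by_cases hρ : 2^(n+1) ≤ ρ
          · rw [h0 ρ (by rw [Set.mem_Ioo, not_and_or, not_lt (a := ρ)]; exact Or.inr hρ), zero_mul]
          · push_neg at hρ
            rw [h0 (ξ - ρ) (by rw [Set.mem_Ioo, not_and_or, not_lt (a := ξ - ρ)]; right; linarith), mul_zero]
      simp only [hz, integral_zero]
    · have hconv : g (n+1) = (g n) ⋆[ContinuousLinearMap.lsmul ℝ ℝ, volume] (g n) := by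
        funext ξ
        rw [convolution_def]
        simp only [g, ContinuousLinearMap.lsmul_apply, smul_eq_mul]
      rw [hconv, MeasureTheory.integral_convolution _ hintg hintg, hint1]
      simp

/-- For every `n`, `∫_{2^n < |ξ| < 2^(n+1)} g_n(ξ)² dξ ≥ 2^(-n)`; and since
`g n` vanishes outside this annulus, also `∫_ℝ g_n(ξ)² dξ ≥ 2^(-n)`. -/
theorem g_sq_integral_lower (n : ℕ) :
    ((2:ℝ) ^ (-(n:ℤ)) ≤ ∫ ξ in {ξ : ℝ | 2 ^ n < |ξ| ∧ |ξ| < 2 ^ (n + 1)}, (g n ξ) ^ 2) ∧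
    ((2:ℝ) ^ (-(n:ℤ)) ≤ ∫ ξ : ℝ, (g n ξ) ^ 2) := by
  obtain ⟨hm, hnn, hle, h0, hint1⟩ := g_props n
  set s : Set ℝ := Set.Ioo ((2:ℝ)^n) (2^(n+1)) with hs
  have hμs : volume s = ENNReal.ofReal (2^n) := by
    rw [hs, Real.volume_Ioo]
    congr 1
    ring
  have hfin : IsFiniteMeasure (volume.restrict s) := by
    constructor
    rw [Measure.restrict_apply_univ, hμs]
    exact ENNReal.ofReal_lt_top
  have hmem : MemLp (g n) (ENNReal.ofReal 2) (volume.restrict s) := by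
    refine MemLp.of_bound hm.aestronglyMeasurable 1 (ae_of_all _ fun ξ => ?_)
    rw [Real.norm_eq_abs, abs_of_nonneg (hnn ξ)]; exact hle ξ
  have hmem1 : MemLp (fun _ : ℝ => (1:ℝ)) (ENNReal.ofReal 2) (volume.restrict s) :=
    memLp_const 1
  have hconj : Real.HolderConjugate 2 2 := Real.HolderConjugate.two_two
  have hhold := MeasureTheory.integral_mul_le_Lp_mul_Lq_of_nonneg hconj
    (μ := volume.restrict s) (f := g n) (g := fun _ => (1:ℝ))
    (ae_of_all _ hnn) (ae_of_all _ fun _ => zero_le_one) hmem hmem1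
  have h1 : (1:ℝ) = ∫ ξ in s, g n ξ := by
    rw [setIntegral_eq_integral_of_forall_compl_eq_zero fun ξ hξ => h0 ξ hξ, hint1]
  have hrw : ∀ x : ℝ, x ^ (2:ℝ) = x ^ 2 := fun x => by
    rw [show (2:ℝ) = ((2:ℕ):ℝ) by norm_num, Real.rpow_natCast]
  have hconst : (∫ _ in s, (1:ℝ) ^ (2:ℝ)) = 2^n := by
    simp only [Real.one_rpow]
    rw [setIntegral_const, smul_eq_mul, mul_one, measureReal_def, hμs,
      ENNReal.toReal_ofReal (by positivity)]
  have hI0 : 0 ≤ ∫ ξ in s, (g n ξ) ^ 2 :=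
    integral_nonneg fun ξ => sq_nonneg _
  have key : (1:ℝ) ≤ (∫ ξ in s, (g n ξ) ^ 2) * 2^n := by
    have h2 : (1:ℝ) ≤ (∫ ξ in s, (g n ξ) ^ (2:ℝ)) ^ (1/(2:ℝ)) * (∫ _ in s, (1:ℝ) ^ (2:ℝ)) ^ (1/(2:ℝ)) := by
      calc (1:ℝ) = ∫ ξ in s, g n ξ * 1 := by simp [← h1]
        _ ≤ _ := hhold
    rw [hconst] at h2
    simp only [hrw] at h2
    rw [← Real.sqrt_eq_rpow, ← Real.sqrt_eq_rpow, ← Real.sqrt_mul hI0] at h2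
    exact Real.one_le_sqrt.mp h2
  have hIs : (2:ℝ) ^ (-(n:ℤ)) ≤ ∫ ξ in s, (g n ξ) ^ 2 := by
    have h2n : (0:ℝ) < 2^n := by positivity
    rw [zpow_neg, zpow_natCast, ← one_div, div_le_iff₀ h2n]
    exact key
  have hset : (∫ ξ in {ξ : ℝ | 2 ^ n < |ξ| ∧ |ξ| < 2 ^ (n + 1)}, (g n ξ) ^ 2) = ∫ ξ : ℝ, (g n ξ) ^ 2 := by
    refine setIntegral_eq_integral_of_forall_compl_eq_zero fun ξ hξ => ?_
    have : ξ ∉ s := by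
      intro hmem'
      obtain ⟨ha, hb⟩ := hmem'
      have hpos : 0 < ξ := lt_trans (by positivity) ha
      exact hξ ⟨by rwa [abs_of_pos hpos], by rwa [abs_of_pos hpos]⟩
    rw [h0 ξ this]; ring
  have htot : (∫ ξ in s, (g n ξ) ^ 2) = ∫ ξ : ℝ, (g n ξ) ^ 2 := by
    refine setIntegral_eq_integral_of_forall_compl_eq_zero fun ξ hξ => ?_
    rw [h0 ξ hξ]; ring
  rw [htot] at hIs
  exact ⟨by rwa [hset], hIs⟩
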